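/- Let X ⊆ V(G) for a path Q of order 7 (a graph isomorphic to P7). Then c1(Q−X) + (2/3)·c3(Q−X) ≤ (4/3)·|V(Q) ∩ X|. -/
import Mathlib


open SimpleGraph

/-- `cCount H i` is the number of connected components of `H` with exactly `i` vertices. -/
noncomputable def cCount {V : Type*} (H : SimpleGraph V) (i : ℕ) : ℕ :=
  Nat.card {c : H.ConnectedComponent // Nat.card c.supp = i}

/-- The component `c` of `F` is (induces) a path of order `n`. -/
def IsPathComp {V : Type*} (F : SimpleGraph V) (n : ℕ) (c : F.ConnectedComponent) : Prop :=
  Nonempty ((SimpleGraph.induce c.supp F) ≃g SimpleGraph.pathGraph n)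

/-- `G` has a spanning subgraph each of whose components is a path of order in `ns`. -/
def HasPathFamilyFactor {V : Type*} (G : SimpleGraph V) (ns : Set ℕ) : Prop :=
  ∃ F ≤ G, ∀ c : F.ConnectedComponent, ∃ n ∈ ns, IsPathComp F n c

/-- `F` is a path-factor of `G`: a spanning subgraph each of whose components is a
path of order at least `2`. -/
def IsPathFactor {V : Type*} (G F : SimpleGraph V) : Prop :=
  F ≤ G ∧ ∀ c : F.ConnectedComponent, ∃ n, 2 ≤ n ∧ IsPathComp F n c

/-- The neighbourhood `N_G(X)`: vertices outside `X` adjacent to some vertex of `X`. -/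
def nbhd {V : Type*} (G : SimpleGraph V) (X : Set V) : Set V :=
  {v | v ∉ X ∧ ∃ u ∈ X, G.Adj u v}


instance pg7adj : DecidableRel (SimpleGraph.pathGraph 7).Adj := fun _ _ =>
  decidable_of_iff _ (SimpleGraph.pathGraph_adj.symm)

instance memcompl (f : Fin 7 → Bool) : DecidablePred (· ∈ ({v | f v} : Set (Fin 7))ᶜ) :=
  fun v => show Decidable (¬ f v = true) by infer_instance

def N (f : Fin 7 → Bool) (i : ℕ) : ℕ :=
  Fintype.card {c : (SimpleGraph.induce ({v | f v} : Set (Fin 7))ᶜ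
    (SimpleGraph.pathGraph 7)).ConnectedComponent // Fintype.card c.supp = i}

lemma cCount_eq_N (f : Fin 7 → Bool) (i : ℕ) :
    cCount (SimpleGraph.induce ({v | f v} : Set (Fin 7))ᶜ (SimpleGraph.pathGraph 7)) i = N f i := by
  rw [cCount, N, Nat.card_congr (Equiv.subtypeEquivRight fun c => by
    rw [Nat.card_eq_fintype_card]), Nat.card_eq_fintype_card]

set_option maxRecDepth 100000 in
lemma key : ∀ f : Fin 7 → Bool,
    3 * N f 1 + 2 * N f 3 ≤ 4 * Fintype.card {v : Fin 7 // f v} := by decide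

/-- for the path `Q` of order `7` and any `X ⊆ V(Q)`,
`c₁(Q−X) + (2/3)c₃(Q−X) ≤ (4/3)|V(Q) ∩ X|`. -/
theorem stmt14 (X : Set (Fin 7)) :
    (cCount (SimpleGraph.induce Xᶜ (SimpleGraph.pathGraph 7)) 1 : ℚ) +
        (2 / 3) * cCount (SimpleGraph.induce Xᶜ (SimpleGraph.pathGraph 7)) 3 ≤
      (4 / 3) * X.ncard := by
  classical
  set f : Fin 7 → Bool := fun v => decide (v ∈ X) with hf
  have hX : X = {v | f v} := by ext v; simp [hf]
  have hcard : X.ncard = Fintype.card {v : Fin 7 // f v} := by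
    rw [hX, Set.ncard_eq_toFinset_card']
    simp [Set.toFinset_setOf]
    rw [Fintype.card_subtype]
  have h := key f
  rw [hX, cCount_eq_N, cCount_eq_N]
  rw [hX] at hcard; rw [hcard]
  have h1 : (3 : ℚ) * N f 1 + 2 * N f 3 ≤ 4 * Fintype.card {v : Fin 7 // f v} := by
    exact_mod_cast h
  linarith
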